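/- Let d_C(x,y) = ∑_{δ∈Δ} w_δ · √(∑_{d∈δ} w_d |x_d − y_d|²) be the combined metric on ℝ^D (positive weights, domains partitioning D). Then every axis-parallel cuboid C = {x ∈ ℝ^D : ∀d, p⁻_d ≤ x_d ≤ p⁺_d} (with p⁻_d ≤ p⁺_d) is convex under d_C: for all x,z ∈ C and y ∈ ℝ^D, if d_C(x,y) + d_C(y,z) = d_C(x,z), then y ∈ C. -/

import Mathlib

open Finset

/-- The combined distance: weighted Manhattan sum over domains of weighted
Euclidean distances within each domain. -/
noncomputable def combinedDist {ι κ : Type*} [Fintype ι] [DecidableEq κ]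
    (doms : Finset κ) (dom : ι → κ) (wδ : κ → ℝ) (wd : ι → ℝ)
    (x y : ι → ℝ) : ℝ :=
  ∑ δ ∈ doms, wδ δ *
    Real.sqrt (∑ d ∈ Finset.univ.filter (fun d => dom d = δ), wd d * |x d - y d| ^ 2)

/-- Every axis-parallel cuboid is convex under the combined metric `d_C`:
if `x, z` lie in the cuboid and `y` is metrically between them, then `y` lies
in the cuboid. -/
theorem cuboid_convex_under_combinedDist {ι κ : Type*} [Fintype ι] [Fintype κ]
    [DecidableEq κ] (dom : ι → κ) (wδ : κ → ℝ) (wd : ι → ℝ)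
    (hwδ : ∀ δ, 0 < wδ δ) (hwd : ∀ d, 0 < wd d)
    (pm pp : ι → ℝ) (hpp : ∀ d, pm d ≤ pp d)
    (x z : ι → ℝ)
    (hx : ∀ d, pm d ≤ x d ∧ x d ≤ pp d)
    (hz : ∀ d, pm d ≤ z d ∧ z d ≤ pp d)
    (y : ι → ℝ)
    (hbetween : combinedDist Finset.univ dom wδ wd x y
        + combinedDist Finset.univ dom wδ wd y z
        = combinedDist Finset.univ dom wδ wd x z) :
    ∀ d, pm d ≤ y d ∧ y d ≤ pp d := by
    classical
  -- embed each domain's weighted coordinates into Euclidean space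
  set ψ : (ι → ℝ) → κ → EuclideanSpace ℝ ι := fun u δ =>
    WithLp.toLp 2 (fun d => if dom d = δ then Real.sqrt (wd d) * u d else 0) with hψ
  have hnorm : ∀ (u v : ι → ℝ) (δ : κ),
      ‖ψ u δ - ψ v δ‖ =
      Real.sqrt (∑ d ∈ Finset.univ.filter (fun d => dom d = δ), wd d * |u d - v d| ^ 2) := by
    intro u v δ
    rw [EuclideanSpace.norm_eq]
    congr 1
    rw [Finset.sum_filter]
    apply Finset.sum_congr rfl
    intro d _
    have hval : (ψ u δ - ψ v δ) d = if dom d = δ then Real.sqrt (wd d) * (u d - v d) else 0 := by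
      simp only [hψ, PiLp.sub_apply, PiLp.toLp_apply]
      split <;> ring
    rw [hval]
    by_cases h : dom d = δ
    · rw [if_pos h, if_pos h, Real.norm_eq_abs, abs_mul, mul_pow, sq_abs (Real.sqrt (wd d)),
        Real.sq_sqrt (hwd d).le]
    · rw [if_neg h, if_neg h]
      simp
  -- per-domain triangle inequality
  have htri : ∀ δ : κ, ‖ψ x δ - ψ z δ‖ ≤ ‖ψ x δ - ψ y δ‖ + ‖ψ y δ - ψ z δ‖ := by
    intro δ
    calc ‖ψ x δ - ψ z δ‖ = ‖(ψ x δ - ψ y δ) + (ψ y δ - ψ z δ)‖ := by rw [sub_add_sub_cancel]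
    _ ≤ _ := norm_add_le _ _
  -- rewrite hbetween via norms
  have hb : ∑ δ : κ, wδ δ * ‖ψ x δ - ψ z δ‖
      = ∑ δ : κ, (wδ δ * ‖ψ x δ - ψ y δ‖ + wδ δ * ‖ψ y δ - ψ z δ‖) := by
    rw [Finset.sum_add_distrib]
    simp only [hnorm, combinedDist] at hbetween ⊢
    linarith
  have hle : ∀ δ ∈ Finset.univ (α := κ), wδ δ * ‖ψ x δ - ψ z δ‖
      ≤ wδ δ * ‖ψ x δ - ψ y δ‖ + wδ δ * ‖ψ y δ - ψ z δ‖ := by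
    intro δ _
    have := htri δ
    nlinarith [(hwδ δ).le]
  have heach := (Finset.sum_eq_sum_iff_of_le hle).mp hb
  intro d0
  have heq0 := heach (dom d0) (Finset.mem_univ _)
  have hδ0 := hwδ (dom d0)
  have heq : ‖ψ x (dom d0) - ψ z (dom d0)‖
      = ‖ψ x (dom d0) - ψ y (dom d0)‖ + ‖ψ y (dom d0) - ψ z (dom d0)‖ := by
    have : wδ (dom d0) * ‖ψ x (dom d0) - ψ z (dom d0)‖
        = wδ (dom d0) * (‖ψ x (dom d0) - ψ y (dom d0)‖ + ‖ψ y (dom d0) - ψ z (dom d0)‖) := by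
      linarith [heq0]
    exact mul_left_cancel₀ hδ0.ne' this
  have hray : SameRay ℝ (ψ x (dom d0) - ψ y (dom d0)) (ψ y (dom d0) - ψ z (dom d0)) := by
    rw [sameRay_iff_norm_add, sub_add_sub_cancel]
    exact heq
  have hs : (0:ℝ) < Real.sqrt (wd d0) := Real.sqrt_pos.mpr (hwd d0)
  have hax : (ψ x (dom d0) - ψ y (dom d0)) d0 = Real.sqrt (wd d0) * (x d0 - y d0) := by
    simp only [hψ, PiLp.sub_apply, PiLp.toLp_apply, if_true]; ring
  have hbz : (ψ y (dom d0) - ψ z (dom d0)) d0 = Real.sqrt (wd d0) * (y d0 - z d0) := by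
    simp only [hψ, PiLp.sub_apply, PiLp.toLp_apply, if_true]; ring
  rcases hray with h | h | ⟨r, s, hr, hs', h⟩
  · -- x = y on the domain
    have := congrFun (congrArg WithLp.ofLp h) d0
    rw [hax] at this
    have hxy : x d0 = y d0 := by
      have := mul_eq_zero.mp this
      rcases this with h' | h'
      · exact absurd h' hs.ne'
      · linarith
    rw [← hxy]; exact hx d0
  · have := congrFun (congrArg WithLp.ofLp h) d0
    rw [hbz] at this
    have hyz : y d0 = z d0 := by
      have := mul_eq_zero.mp this
      rcases this with h' | h'
      · exact absurd h' hs.ne'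
      · linarith
    rw [hyz]; exact hz d0
  · have := congrFun (congrArg WithLp.ofLp h) d0
    simp only [PiLp.smul_apply, smul_eq_mul] at this
    rw [hax, hbz] at this
    have hkey : r * (x d0 - y d0) = s * (y d0 - z d0) := by
      have h2 : Real.sqrt (wd d0) * (r * (x d0 - y d0) - s * (y d0 - z d0)) = 0 := by ring_nf; nlinarith [this]
      rcases mul_eq_zero.mp h2 with h' | h'
      · exact absurd h' hs.ne'
      · linarith
    obtain ⟨hx1, hx2⟩ := hx d0
    obtain ⟨hz1, hz2⟩ := hz d0
    constructor <;> nlinarith [hkey, hr, hs']
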